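/- arXiv:2602.19302 — 4 statements merged into one kernel-verified Lean document; each statement's English description precedes it below -/
import Mathlib

section
/- For 0 < e < 1, 0 < q, q ≠ e², and any real Θ, the equation e·sin θ + e√q·sin Θ = √q·sin(θ - Θ) in the unknown unit vector (cos θ, sin θ) has exactly the two solutions given by cos θ_j = (−sin²Θ + (−1)^{j−1}(cos Θ − e/√q)·A)/(e·B) and sin θ_j = sin Θ·(cos Θ − e/√q + (−1)^{j−1}A)/(e·B) for j = 1,2, where B = 1/e² + 1/q − 2cos Θ/(e√q) and A = √(B − sin²Θ). -/
open Real

theorem stmt5 (e q Θ : ℝ) (he0 : 0 < e) (he1 : e < 1) (hq : 0 < q) (hqe : q ≠ e ^ 2)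
    (B A : ℝ)
    (hB : B = 1 / e ^ 2 + 1 / q - 2 * cos Θ / (e * sqrt q))
    (hA : A = sqrt (B - sin Θ ^ 2)) :
    {p : ℝ × ℝ | p.1 ^ 2 + p.2 ^ 2 = 1 ∧
        e * p.2 + e * sqrt q * sin Θ = sqrt q * (p.2 * cos Θ - p.1 * sin Θ)} =
      {((-sin Θ ^ 2 + (cos Θ - e / sqrt q) * A) / (e * B),
         sin Θ * (cos Θ - e / sqrt q + A) / (e * B)),
       ((-sin Θ ^ 2 - (cos Θ - e / sqrt q) * A) / (e * B),
         sin Θ * (cos Θ - e / sqrt q - A) / (e * B))} := by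
  have hs0 : (0:ℝ) < sqrt q := Real.sqrt_pos.mpr hq
  set s := sqrt q with hsdef
  have hs2 : s ^ 2 = q := Real.sq_sqrt hq.le
  have hsne : s ≠ 0 := ne_of_gt hs0
  have hene : e ≠ 0 := ne_of_gt he0
  have hes : e ≠ s := by
    intro h
    exact hqe (by rw [← hs2, h])
  set D := cos Θ - e / s with hD
  have hpyth : sin Θ ^ 2 + cos Θ ^ 2 = 1 := sin_sq_add_cos_sq Θ
  have hB' : B = 1 / e ^ 2 + 1 / s ^ 2 - 2 * cos Θ / (e * s) := by rw [hB, ← hs2]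
  have hsD : s * D = s * cos Θ - e := by rw [hD]; field_simp
  -- key identity: e^2 * B = D^2 + sin Θ^2
  have hL : e ^ 2 * B = D ^ 2 + sin Θ ^ 2 := by
    rw [hB', hD]
    field_simp
    linear_combination (-s ^ 2) * hpyth
  have hDne : sin Θ = 0 → D ≠ 0 := by
    intro hsin hD0
    have hsin2 : sin Θ ^ 2 = 0 := by rw [hsin]; ring
    have hc : cos Θ = e / s := by rw [hD] at hD0; linarith
    have h1 : (e / s) ^ 2 = 1 := by rw [← hc]; linarith
    field_simp at h1
    exact hes ((pow_left_inj₀ he0.le hs0.le two_ne_zero).mp h1)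
  have hLpos : 0 < D ^ 2 + sin Θ ^ 2 := by
    rcases eq_or_ne (sin Θ) 0 with h | h
    · nlinarith [sq_pos_of_ne_zero (hDne h), sq_nonneg (sin Θ)]
    · nlinarith [sq_pos_of_ne_zero h, sq_nonneg D]
  have hBpos : 0 < B := by nlinarith
  have hBne : B ≠ 0 := ne_of_gt hBpos
  have heB : e * B ≠ 0 := mul_ne_zero hene hBne
  have hApos2 : 0 < B - sin Θ ^ 2 := by
    rcases eq_or_ne (sin Θ) 0 with h | h
    · rw [h]; simpa using hBpos
    · have he2 : e ^ 2 < 1 := by nlinarith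
      have he2' : (0:ℝ) < e ^ 2 := by positivity
      nlinarith [sq_pos_of_ne_zero h, sq_nonneg D, hL, he2, he2']
  have hA2 : A ^ 2 = B - sin Θ ^ 2 := by
    rw [hA]; exact Real.sq_sqrt hApos2.le
  ext ⟨x, y⟩
  simp only [Set.mem_setOf_eq, Set.mem_insert_iff, Set.mem_singleton_iff, Prod.mk.injEq]
  constructor
  · rintro ⟨hcirc, heq⟩
    have hlin : sin Θ * x - D * y = -e * sin Θ := by
      have h : (sin Θ * x - D * y) * s = (-e * sin Θ) * s := by
        linear_combination heq - y * hsD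
      exact mul_right_cancel₀ hsne h
    set t := sin Θ * y + D * x with ht
    have ht2 : (t - e * A) * (t + e * A) = 0 := by
      have h : t ^ 2 = (e * A) ^ 2 := by
        linear_combination (sin Θ ^ 2 + D ^ 2) * hcirc -
          (sin Θ * x - D * y - e * sin Θ) * hlin - hL - e ^ 2 * hA2
      linear_combination h
    have hx : e ^ 2 * B * x = -e * sin Θ ^ 2 + D * t := by
      linear_combination sin Θ * hlin - D * ht + x * hL
    have hy : e ^ 2 * B * y = D * e * sin Θ + sin Θ * t := by
      linear_combination (-D) * hlin - sin Θ * ht + y * hL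
    rcases mul_eq_zero.mp ht2 with h | h
    · left
      have htA : t = e * A := by linarith
      constructor
      · rw [eq_div_iff heB]
        refine mul_right_cancel₀ hene ?_
        linear_combination hx + D * htA
      · rw [eq_div_iff heB]
        refine mul_right_cancel₀ hene ?_
        linear_combination hy + sin Θ * htA
    · right
      have htA : t = -(e * A) := by linarith
      constructor
      · rw [eq_div_iff heB]
        refine mul_right_cancel₀ hene ?_
        linear_combination hx + D * htA
      · rw [eq_div_iff heB]
        refine mul_right_cancel₀ hene ?_
        linear_combination hy + sin Θ * htA
  · rintro (⟨hx, hy⟩ | ⟨hx, hy⟩) <;> subst hx <;> subst hy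
    · set x := (-sin Θ ^ 2 + D * A) / (e * B) with hxdef
      set y := sin Θ * (D + A) / (e * B) with hydef
      have hx' : x * (e * B) = -sin Θ ^ 2 + D * A := by
        rw [hxdef]; exact div_mul_cancel₀ _ heB
      have hy' : y * (e * B) = sin Θ * (D + A) := by
        rw [hydef]; exact div_mul_cancel₀ _ heB
      have hlinpt : sin Θ * x - D * y = -e * sin Θ := by
        have h1 : (sin Θ * x - D * y) * (e * B) = (-e * sin Θ) * (e * B) := by
          linear_combination sin Θ * hx' - D * hy' + sin Θ * hL
        exact mul_right_cancel₀ heB h1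
      refine ⟨?_, ?_⟩
      · have h2 : (x ^ 2 + y ^ 2) * (e * B) ^ 2 = 1 * (e * B) ^ 2 := by
          linear_combination (x * (e * B) + (-sin Θ ^ 2 + D * A)) * hx' +
            (y * (e * B) + sin Θ * (D + A)) * hy' + (D ^ 2 + sin Θ ^ 2) * hA2 - B * hL
        exact mul_right_cancel₀ (pow_ne_zero 2 heB) h2
      · linear_combination s * hlinpt + y * hsD
    · set x := (-sin Θ ^ 2 - D * A) / (e * B) with hxdef
      set y := sin Θ * (D - A) / (e * B) with hydef
      have hx' : x * (e * B) = -sin Θ ^ 2 - D * A := by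
        rw [hxdef]; exact div_mul_cancel₀ _ heB
      have hy' : y * (e * B) = sin Θ * (D - A) := by
        rw [hydef]; exact div_mul_cancel₀ _ heB
      have hlinpt : sin Θ * x - D * y = -e * sin Θ := by
        have h1 : (sin Θ * x - D * y) * (e * B) = (-e * sin Θ) * (e * B) := by
          linear_combination sin Θ * hx' - D * hy' + sin Θ * hL
        exact mul_right_cancel₀ heB h1
      refine ⟨?_, ?_⟩
      · have h2 : (x ^ 2 + y ^ 2) * (e * B) ^ 2 = 1 * (e * B) ^ 2 := by
          linear_combination (x * (e * B) + (-sin Θ ^ 2 - D * A)) * hx' +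
            (y * (e * B) + sin Θ * (D - A)) * hy' + (D ^ 2 + sin Θ ^ 2) * hA2 - B * hL
        exact mul_right_cancel₀ (pow_ne_zero 2 heB) h2
      · linear_combination s * hlinpt + y * hsD
end

section
/- Let q ∈ (0,1) and set θ_q = arccos √q and θ̃_q = π − θ_q. Suppose g : ℝ → ℝ is C¹, 2π-periodic, and there exist θ₁ ∈ (0, θ̃_q) and θ₂ ∈ (θ̃_q, π) such that |g(t)| < min(h(θ₁), h(θ₂)) and h'(θ₂) < g'(t) < min(h'(0), h'(θ₁)) for all t, where h(t) = √q·sin t/(1+√q·cos t). Then for every Θ ∈ ℝ, the equation g(θ) = h(θ − Θ) has exactly one solution θ with θ − Θ ∈ (−θ₁, θ₁) and exactly one solution with θ − Θ ∈ (θ₂, 2π − θ₂), and no solutions with θ − Θ ∈ [θ₁, θ₂] ∪ [2π − θ₂, 2π − θ₁] (mod 2π). -/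
open Real

noncomputable def phiA (r c : ℝ) : ℝ := r * (c + r) / (1 + r * c) ^ 2

lemma denom_pos {r c : ℝ} (hr0 : 0 < r) (hr1 : r < 1) (hc : -1 ≤ c) : 0 < 1 + r * c := by
  nlinarith

lemma phi_min {r a c : ℝ} (hr0 : 0 < r) (hr1 : r < 1) (har : -r < a) (hac : a ≤ c)
    (hc1 : c ≤ 1) : min (phiA r 1) (phiA r a) ≤ phiA r c := by
  have ha1 : (-1:ℝ) ≤ a := by nlinarith
  have hda : 0 < 1 + r * a := denom_pos hr0 hr1 ha1
  have hdc : 0 < 1 + r * c := denom_pos hr0 hr1 (by linarith)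
  have hd1 : 0 < 1 + r * 1 := by nlinarith
  have hcr : -r ≤ c := le_trans har.le hac
  rcases le_or_gt 0 (1 - 2*r^2 - r^2*(a*c) - r^3*(a+c)) with hK | hK
  · refine le_trans (min_le_right _ _) ?_
    unfold phiA
    rw [div_le_div_iff₀ (by positivity) (by positivity)]
    nlinarith [mul_nonneg (mul_nonneg (sub_nonneg.2 hac) hK) hr0.le]
  · refine le_trans (min_le_left _ _) ?_
    have hK2 : 1 - 2*r^2 - r^2*(c*1) - r^3*(c+1) < 0 := by
      nlinarith [mul_nonneg (mul_nonneg (by linarith : (0:ℝ) ≤ 1 - a) (by linarith : (0:ℝ) ≤ c + r)) (sq_nonneg r)]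
    unfold phiA
    rw [div_le_div_iff₀ (by positivity) (by positivity)]
    nlinarith [mul_nonneg (mul_nonneg (sub_nonneg.2 hc1) (le_of_lt (neg_pos.2 hK2))) hr0.le]

lemma phi_max {r b c : ℝ} (hr0 : 0 < r) (hr1 : r < 1) (hc1 : -1 ≤ c) (hcb : c ≤ b)
    (hbr : b ≤ -r) : phiA r c ≤ phiA r b := by
  have hdb : 0 < 1 + r * b := denom_pos hr0 hr1 (le_trans hc1 hcb)
  have hdc : 0 < 1 + r * c := denom_pos hr0 hr1 hc1
  have hK : 0 < 1 - 2*r^2 - r^2*(c*b) - r^3*(c+b) := by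
    nlinarith [mul_nonneg (mul_nonneg (by linarith : (0:ℝ) ≤ b + 1) (by linarith : (0:ℝ) ≤ -(c+r))) (sq_nonneg r),
      mul_nonneg (mul_nonneg (by linarith : (0:ℝ) ≤ c + 1) (by linarith : (0:ℝ) ≤ 1 - r)) (sq_nonneg r),
      mul_pos (mul_pos (by linarith : (0:ℝ) < 1 - r) (by linarith : (0:ℝ) < 1 - r)) (by linarith : (0:ℝ) < 1 + 2*r)]
  unfold phiA
  rw [div_le_div_iff₀ (by positivity) (by positivity)]
  nlinarith [mul_nonneg (mul_nonneg (sub_nonneg.2 hcb) hK.le) hr0.le]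

theorem stmt16 (q : ℝ) (hq0 : 0 < q) (hq1 : q < 1)
    (h g : ℝ → ℝ)
    (hh : ∀ t, h t = sqrt q * sin t / (1 + sqrt q * cos t))
    (hg : ContDiff ℝ 1 g) (hper : Function.Periodic g (2 * π))
    (θ1 θ2 : ℝ)
    (hθ1 : θ1 ∈ Set.Ioo 0 (π - arccos (sqrt q)))
    (hθ2 : θ2 ∈ Set.Ioo (π - arccos (sqrt q)) π)
    (hbd : ∀ t, |g t| < min (h θ1) (h θ2))
    (hbd' : ∀ t, deriv h θ2 < deriv g t ∧ deriv g t < min (deriv h 0) (deriv h θ1)) :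
    ∀ Θ : ℝ,
      (∃! t : ℝ, t - Θ ∈ Set.Ioo (-θ1) θ1 ∧ g t = h (t - Θ)) ∧
      (∃! t : ℝ, t - Θ ∈ Set.Ioo θ2 (2 * π - θ2) ∧ g t = h (t - Θ)) ∧
      (∀ t : ℝ, t - Θ ∈ Set.Icc θ1 θ2 ∪ Set.Icc (2 * π - θ2) (2 * π - θ1) →
        g t ≠ h (t - Θ)) := by
  set r := sqrt q with hrdef
  have hr0 : 0 < r := Real.sqrt_pos.2 hq0
  have hrsq : r ^ 2 = q := Real.sq_sqrt hq0.le
  have hr1 : r < 1 := by nlinarith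
  set τ := π - arccos r with hτdef
  have hcosτ : cos τ = -r := by
    rw [hτdef, Real.cos_pi_sub, Real.cos_arccos (by linarith) hr1.le]
  have harc0 : 0 < arccos r := Real.arccos_pos.2 hr1
  have harcπ : arccos r < π := lt_trans (Real.arccos_lt_pi_div_two.2 hr0) (by linarith [Real.pi_pos])
  have hτ0 : 0 < τ := by simp only [hτdef]; linarith
  have hτπ : τ < π := by simp only [hτdef]; linarith
  obtain ⟨hθ1p, hθ1τ⟩ := hθ1
  obtain ⟨hθ2τ, hθ2π⟩ := hθ2
  have hθ1π : θ1 < π := lt_trans hθ1τ hτπ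
  -- cosines
  have hc1r : -r < cos θ1 := by
    have := Real.strictAntiOn_cos ⟨hθ1p.le, hθ1π.le⟩ ⟨hτ0.le, hτπ.le⟩ hθ1τ
    rw [hcosτ] at this; exact this
  have hc2r : cos θ2 < -r := by
    have := Real.strictAntiOn_cos ⟨hτ0.le, hτπ.le⟩ ⟨by linarith, hθ2π.le⟩ hθ2τ
    rw [hcosτ] at this; exact this
  -- denominators
  have hden : ∀ s : ℝ, 0 < 1 + r * cos s := fun s => denom_pos hr0 hr1 (neg_one_le_cos s)
  -- derivative of h
  have hfun : h = fun t => r * sin t / (1 + r * cos t) := funext hh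
  have hder : ∀ s : ℝ, HasDerivAt h (phiA r (cos s)) s := by
    intro s
    rw [hfun]
    have d1 : HasDerivAt (fun t : ℝ => r * sin t) (r * cos s) s :=
      (Real.hasDerivAt_sin s).const_mul r
    have d2 : HasDerivAt (fun t : ℝ => 1 + r * cos t) (r * -sin s) s :=
      (((Real.hasDerivAt_cos s).const_mul r).const_add 1)
    have hd := d1.div d2 (hden s).ne'
    have heq : (r * cos s * (1 + r * cos s) - r * sin s * (r * -sin s)) / (1 + r * cos s) ^ 2
        = phiA r (cos s) := by
      unfold phiA
      congr 1
      linear_combination r ^ 2 * Real.sin_sq_add_cos_sq s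
    rw [heq] at hd
    exact hd
  have hderiv : ∀ s : ℝ, deriv h s = phiA r (cos s) := fun s => (hder s).deriv
  have hdiff : Differentiable ℝ h := fun s => (hder s).differentiableAt
  have hcont : Continuous h := hdiff.continuous
  -- symmetry of h
  have hodd : ∀ s : ℝ, h (-s) = -h s := by
    intro s; rw [hh, hh, Real.sin_neg, Real.cos_neg]; ring
  have h2pi : ∀ s : ℝ, h (2 * π - s) = -h s := by
    intro s
    rw [hh, hh, show 2 * π - s = -s + 2 * π by ring, Real.sin_add_two_pi, Real.cos_add_two_pi,
      Real.sin_neg, Real.cos_neg]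
    ring
  -- bounds on g values
  have hbd1 : ∀ t, |g t| < h θ1 := fun t => lt_of_lt_of_le (hbd t) (min_le_left _ _)
  have hbd2 : ∀ t, |g t| < h θ2 := fun t => lt_of_lt_of_le (hbd t) (min_le_right _ _)
  -- derivative bound restated
  have hgd1 : ∀ t, deriv g t < min (phiA r 1) (phiA r (cos θ1)) := by
    intro t
    have := (hbd' t).2
    rwa [hderiv, hderiv, Real.cos_zero] at this
  have hgd2 : ∀ t, phiA r (cos θ2) < deriv g t := by
    intro t
    have := (hbd' t).1
    rwa [hderiv] at this
  -- monotonicity of h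
  have hmono : MonotoneOn h (Set.Icc 0 τ) := by
    apply monotoneOn_of_deriv_nonneg (convex_Icc _ _) hcont.continuousOn
      hdiff.differentiableOn
    intro x hx
    rw [interior_Icc] at hx
    rw [hderiv]
    have hcx : -r ≤ cos x := by
      rw [← hcosτ]
      exact Real.cos_le_cos_of_nonneg_of_le_pi hx.1.le hτπ.le hx.2.le
    unfold phiA
    apply div_nonneg _ (sq_nonneg _)
    nlinarith
  have hanti2 : AntitoneOn h (Set.Icc τ π) := by
    apply antitoneOn_of_deriv_nonpos (convex_Icc _ _) hcont.continuousOn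
      hdiff.differentiableOn
    intro x hx
    rw [interior_Icc] at hx
    rw [hderiv]
    have hcx : cos x ≤ -r := by
      rw [← hcosτ]
      exact Real.cos_le_cos_of_nonneg_of_le_pi hτ0.le (by linarith [hx.2]) hx.1.le
    unfold phiA
    apply div_nonpos_of_nonpos_of_nonneg _ (sq_nonneg _)
    nlinarith
  intro Θ
  set F : ℝ → ℝ := fun t => g t - h (t - Θ) with hFdef
  have hgc : Continuous g := hg.continuous
  have hFcont : Continuous F := hgc.sub (hcont.comp (continuous_id.sub continuous_const))
  have hFder : ∀ t : ℝ, HasDerivAt F (deriv g t - phiA r (cos (t - Θ))) t := by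
    intro t
    have dg : HasDerivAt g (deriv g t) t := (hg.differentiable one_ne_zero t).hasDerivAt
    have dh : HasDerivAt (fun u : ℝ => h (u - Θ)) (phiA r (cos (t - Θ))) t := by
      have := (hder (t - Θ)).comp t ((hasDerivAt_id t).sub_const Θ)
      rw [mul_one] at this
      exact this
    exact dg.sub dh
  have hFderiv : ∀ t : ℝ, deriv F t = deriv g t - phiA r (cos (t - Θ)) :=
    fun t => (hFder t).deriv
  constructor
  · -- first interval
    have hanti : StrictAntiOn F (Set.Icc (Θ - θ1) (Θ + θ1)) := by
      apply strictAntiOn_of_deriv_neg (convex_Icc _ _) hFcont.continuousOn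
      intro x hx
      rw [interior_Icc] at hx
      rw [hFderiv]
      have habs : |x - Θ| ≤ θ1 := abs_le.2 ⟨by linarith [hx.1], by linarith [hx.2]⟩
      have hc : cos θ1 ≤ cos (x - Θ) := by
        rw [← Real.cos_abs (x - Θ)]
        exact Real.cos_le_cos_of_nonneg_of_le_pi (abs_nonneg _) hθ1π.le habs
      have := phi_min hr0 hr1 hc1r hc (cos_le_one _)
      have h2 := hgd1 x
      linarith
    have hFa : 0 < F (Θ - θ1) := by
      have harg : Θ - θ1 - Θ = -θ1 := by ring
      have := (abs_lt.1 (hbd1 (Θ - θ1))).1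
      simp only [hFdef, harg, hodd]
      linarith
    have hFb : F (Θ + θ1) < 0 := by
      have harg : Θ + θ1 - Θ = θ1 := by ring
      have := (abs_lt.1 (hbd1 (Θ + θ1))).2
      simp only [hFdef, harg]
      linarith
    obtain ⟨t, ht, hFt⟩ := intermediate_value_Ioo' (by linarith : Θ - θ1 ≤ Θ + θ1)
      hFcont.continuousOn ⟨hFb, hFa⟩
    refine ⟨t, ⟨⟨by linarith [ht.1], by linarith [ht.2]⟩, ?_⟩, ?_⟩
    · have : g t - h (t - Θ) = 0 := hFt
      linarith
    · intro t' ⟨ht', heq'⟩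
      have hFt' : F t' = 0 := by simp only [hFdef]; linarith [heq'.symm.le, heq'.le]
      apply hanti.injOn
        (Set.mem_Icc.2 ⟨by linarith [ht'.1], by linarith [ht'.2]⟩)
        (Set.mem_Icc.2 ⟨ht.1.le, ht.2.le⟩)
      rw [hFt', hFt]
  constructor
  · -- second interval
    have hmono2 : StrictMonoOn F (Set.Icc (Θ + θ2) (Θ + (2 * π - θ2))) := by
      apply strictMonoOn_of_deriv_pos (convex_Icc _ _) hFcont.continuousOn
      intro x hx
      rw [interior_Icc] at hx
      rw [hFderiv]
      have hs1 : θ2 < x - Θ := by linarith [hx.1]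
      have hs2 : x - Θ < 2 * π - θ2 := by linarith [hx.2]
      have habs : |x - Θ - π| ≤ π - θ2 := abs_le.2 ⟨by linarith, by linarith⟩
      have hc : cos (x - Θ) ≤ cos θ2 := by
        have h1 : cos (π - θ2) ≤ cos |x - Θ - π| :=
          Real.cos_le_cos_of_nonneg_of_le_pi (abs_nonneg _) (by linarith) habs
        rw [Real.cos_abs, Real.cos_sub_pi, Real.cos_pi_sub] at h1
        linarith
      have := phi_max hr0 hr1 (neg_one_le_cos _) hc hc2r.le
      have h2 := hgd2 x
      linarith
    have hFa : F (Θ + θ2) < 0 := by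
      have harg : Θ + θ2 - Θ = θ2 := by ring
      have := (abs_lt.1 (hbd2 (Θ + θ2))).2
      simp only [hFdef, harg]
      linarith
    have hFb : 0 < F (Θ + (2 * π - θ2)) := by
      have harg : Θ + (2 * π - θ2) - Θ = 2 * π - θ2 := by ring
      have := (abs_lt.1 (hbd2 (Θ + (2 * π - θ2)))).1
      simp only [hFdef, harg, h2pi]
      linarith
    obtain ⟨t, ht, hFt⟩ := intermediate_value_Ioo (by linarith : Θ + θ2 ≤ Θ + (2 * π - θ2))
      hFcont.continuousOn ⟨hFa, hFb⟩
    refine ⟨t, ⟨⟨by linarith [ht.1], by linarith [ht.2]⟩, ?_⟩, ?_⟩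
    · have : g t - h (t - Θ) = 0 := hFt
      linarith
    · intro t' ⟨ht', heq'⟩
      have hFt' : F t' = 0 := by simp only [hFdef]; linarith [heq'.le, heq'.symm.le]
      apply hmono2.injOn
        (Set.mem_Icc.2 ⟨by linarith [ht'.1], by linarith [ht'.2]⟩)
        (Set.mem_Icc.2 ⟨ht.1.le, ht.2.le⟩)
      rw [hFt', hFt]
  · -- no solutions on middle intervals
    intro t hmem heq
    have hmid : ∀ s : ℝ, s ∈ Set.Icc θ1 θ2 → min (h θ1) (h θ2) ≤ h s := by
      intro s hs
      rcases le_total s τ with hsτ | hsτ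
      · refine le_trans (min_le_left _ _) ?_
        exact hmono ⟨hθ1p.le, hθ1τ.le⟩ ⟨by linarith [hs.1], hsτ⟩ hs.1
      · refine le_trans (min_le_right _ _) ?_
        exact hanti2 ⟨hsτ, by linarith [hs.2]⟩ ⟨hθ2τ.le, hθ2π.le⟩ hs.2
    rcases hmem with hs | hs
    · have := hmid (t - Θ) hs
      have hlt : g t < h (t - Θ) := lt_of_lt_of_le (lt_of_abs_lt (hbd t)) this
      exact absurd heq hlt.ne
    · have hseg : 2 * π - (t - Θ) ∈ Set.Icc θ1 θ2 := ⟨by linarith [hs.2], by linarith [hs.1]⟩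
      have hval := hmid _ hseg
      have hsym : h (t - Θ) = -h (2 * π - (t - Θ)) := by
        have := h2pi (2 * π - (t - Θ))
        rw [show 2 * π - (2 * π - (t - Θ)) = t - Θ by ring] at this
        linarith
      have hlow : -min (h θ1) (h θ2) < g t := (abs_lt.1 (hbd t)).1
      have : h (t - Θ) < g t := by
        rw [hsym]; linarith
      exact absurd heq this.ne'
end

section
/- Let e ∈ (0,1), q > 0 with e²q > 0, and Θ ∈ ℝ with sinΘ ≠ 0. With A_l = A((−1)^{l−1}Θ) as above, the quantity f_{j,l}/(e·a·sinΘ) − 1 = (−1)^{j−1}·(−(−1)^{l−1}cosΘ + 1/(e√q))/A_l, where f_{j,l} = ρ(θ_{j,l})·sin(θ_{j,l} − Θ) is computed from the explicit ellipse formulas. Consequently, f_{1,l} = f_{2,l} if and only if (−1)^{l−1}·cosΘ = 1/(e√q). -/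
open Real


lemma auxPos (e r C S : ℝ) (he0 : 0 < e) (he1 : e < 1) (hr : 0 < r)
    (hre : e ≠ r) (hS : S ≠ 0) (hpy : S ^ 2 + C ^ 2 = 1) :
    0 < 1 / e ^ 2 + 1 / r ^ 2 - 2 * C / (e * r) - S ^ 2 := by
  have hS2 : 0 < S ^ 2 := pow_pos (abs_pos.mpr hS) 2 |>.trans_eq (by rw [sq_abs]) |>.trans_le le_rfl
  have hC2 : C ^ 2 < 1 := by nlinarith
  have h1 : 0 < 1 - C := by nlinarith
  have h2 : 0 < 1 + C := by nlinarith
  have hre2 : 0 < (e - r) ^ 2 := by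
    have : e - r ≠ 0 := sub_ne_zero.mpr hre
    positivity
  have her : 0 < e * r := mul_pos he0 hr
  have key : 0 < C ^ 2 * e ^ 2 * r ^ 2 - 2 * C * (e * r) + e ^ 2 + r ^ 2 - e ^ 2 * r ^ 2 := by
    rcases le_or_gt (e * r) 1 with h | h
    · have hpos : 0 < e * r * (1 - C) * (2 - e * r * (1 + C)) := by
        apply mul_pos (mul_pos her h1)
        nlinarith
      nlinarith [hre2, hpos]
    · have hr1 : 1 < r := by nlinarith
      nlinarith [sq_nonneg (C * e * r - 1), mul_pos (by nlinarith : (0:ℝ) < 1 - e ^ 2)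
        (by nlinarith : (0:ℝ) < r ^ 2 - 1)]
  have he' : e ≠ 0 := ne_of_gt he0
  have hr' : r ≠ 0 := ne_of_gt hr
  have heq : 1 / e ^ 2 + 1 / r ^ 2 - 2 * C / (e * r) - S ^ 2 =
      (C ^ 2 * e ^ 2 * r ^ 2 - 2 * C * (e * r) + e ^ 2 + r ^ 2 - e ^ 2 * r ^ 2) / (e ^ 2 * r ^ 2) := by
    field_simp
    linear_combination (-(e^2 * r^2)) * hpy
  rw [heq]
  positivity

set_option maxHeartbeats 1000000 in
lemma auxMain (a e r C S σ B A c s : ℝ) (ha : 0 < a) (he0 : 0 < e) (he1 : e < 1)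
    (hr : 0 < r) (hre : e ≠ r) (hS : S ≠ 0) (hpy : S ^ 2 + C ^ 2 = 1)
    (hσ : σ = 1 ∨ σ = -1)
    (hB : B = 1 / e ^ 2 + 1 / r ^ 2 - 2 * C / (e * r))
    (hA0 : 0 < A) (hA2 : A ^ 2 = B - S ^ 2)
    (hc : c = (-S ^ 2 + σ * (C - e / r) * A) / (e * B))
    (hs : s = S * (C - e / r + σ * A) / (e * B)) :
    a * (1 - e ^ 2) / (1 + e * c) * (s * C - c * S)
      = e * a * S * (A + σ * (1 / (e * r) - C)) / A := by
  have he' : e ≠ 0 := ne_of_gt he0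
  have hr' : r ≠ 0 := ne_of_gt hr
  have ha' : a ≠ 0 := ne_of_gt ha
  have hA' : A ≠ 0 := ne_of_gt hA0
  have hS2 : 0 < S ^ 2 := by positivity
  have hB0 : 0 < B := by nlinarith [hA2, sq_nonneg A]
  have hB' : B ≠ 0 := ne_of_gt hB0
  have hA2e : e ^ 2 * r ^ 2 * A ^ 2 = r ^ 2 + e ^ 2 - 2 * C * e * r - e ^ 2 * r ^ 2 * S ^ 2 := by
    rw [hA2, hB]; field_simp
  have hdiff : (C - e / r) ^ 2 < A ^ 2 := by
    have h1 : A ^ 2 - (C - e / r) ^ 2 = (1 - e ^ 2) * B := by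
      rw [hA2, hB]; field_simp
      linear_combination (-(e ^ 2 * r ^ 2)) * hpy
    nlinarith [mul_pos (by nlinarith : (0:ℝ) < 1 - e ^ 2) hB0]
  have hDpos : 0 < A + σ * (C - e / r) := by
    rcases hσ with h | h <;> subst h <;> nlinarith [hdiff, hA0]
  have hD' : A * r + σ * (C * r - e) ≠ 0 := by
    have : A * r + σ * (C * r - e) = r * (A + σ * (C - e / r)) := by field_simp
    rw [this]
    positivity
  have h1ec : 1 + e * c = A * (A * r + σ * (C * r - e)) / (B * r) := by
    rw [hc]; field_simp
    linear_combination (-r) * hA2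
  have hsc : s * C - c * S = S * (r - C * e + σ * A * e) / (e * B * r) := by
    rw [hs, hc]; field_simp
    linear_combination r * hpy
  have hkeyP : r * (1 - e ^ 2) * (r - C * e + σ * A * e)
      = e * ((e * r * A + σ * (1 - C * e * r)) * (A * r + σ * (C * r - e))) := by
    rcases hσ with h | h <;> subst h <;>
      linear_combination (e ^ 2 * r ^ 2) * hpy - hA2e
  have hDD : 0 < A * (A * r + σ * (C * r - e)) / (B * r) := by
    have h2 : A * r + σ * (C * r - e) = r * (A + σ * (C - e / r)) := by field_simp
    rw [h2]
    positivity
  have hden : (1 : ℝ) + e * c ≠ 0 := by rw [h1ec]; exact ne_of_gt hDD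
  rw [div_mul_eq_mul_div, div_eq_div_iff hden hA', hsc, h1ec]
  rcases hσ with h | h <;> subst h <;> field_simp <;>
    linear_combination (e ^ 2 * r ^ 2) * hpy - hA2e

lemma auxFull (a e q r Θ C S σ δ Bl Al cjl sjl fjl : ℝ)
    (ha : 0 < a) (he0 : 0 < e) (he1 : e < 1) (hq : 0 < q)
    (hr : 0 < r) (hr2 : r ^ 2 = q) (hre : e ≠ r) (hsin : Real.sin Θ ≠ 0)
    (hσ : σ = 1 ∨ σ = -1) (hδ : δ = 1 ∨ δ = -1)
    (hCd : C = δ * Real.cos Θ) (hSd : S = δ * Real.sin Θ)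
    (hBl : Bl = 1 / e ^ 2 + 1 / q - 2 * C / (e * r))
    (hAl : Al = Real.sqrt (Bl - S ^ 2))
    (hcl : cjl = (-S ^ 2 + σ * (C - e / r) * Al) / (e * Bl))
    (hsl : sjl = S * (C - e / r + σ * Al) / (e * Bl))
    (hfl : fjl = a * (1 - e ^ 2) / (1 + e * cjl) * (sjl * Real.cos Θ - cjl * Real.sin Θ)) :
    fjl = e * a * Real.sin Θ * (Al + σ * (1 / (e * r) - C)) / Al ∧ 0 < Al := by
  have hS0 : S ≠ 0 := by
    rcases hδ with h | h <;> subst h <;> simp [hSd, hsin]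
  have hpy : S ^ 2 + C ^ 2 = 1 := by
    rcases hδ with h | h <;> subst h <;> rw [hCd, hSd] <;>
      [skip; ring_nf] <;> nlinarith [Real.sin_sq_add_cos_sq Θ]
  have hB' : Bl = 1 / e ^ 2 + 1 / r ^ 2 - 2 * C / (e * r) := by rw [hBl, hr2]
  have hpos : 0 < Bl - S ^ 2 := by
    have := auxPos e r C S he0 he1 hr hre hS0 hpy
    rw [hB']; linarith
  have hA0 : 0 < Al := by rw [hAl]; exact Real.sqrt_pos.mpr hpos
  have hA2 : Al ^ 2 = Bl - S ^ 2 := by rw [hAl]; exact Real.sq_sqrt hpos.le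
  have E := auxMain a e r C S σ Bl Al cjl sjl ha he0 he1 hr hre hS0 hpy hσ hB' hA0 hA2 hcl hsl
  refine ⟨?_, hA0⟩
  rw [hfl, hCd]
  rcases hδ with h | h <;> subst h <;> rw [hCd, hSd] at E <;>
    [linear_combination E; linear_combination -E]


theorem stmt18 (a e q Θ : ℝ) (ha : 0 < a) (he0 : 0 < e) (he1 : e < 1)
    (hq : 0 < q) (hqe : q ≠ e ^ 2) (hsin : sin Θ ≠ 0)
    (Θl B A : ℕ → ℝ) (c s f : ℕ → ℕ → ℝ)
    (hΘl : ∀ l, Θl l = Θ + ((l : ℝ) - 1) * π)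
    (hB : ∀ l, B l = 1 / e ^ 2 + 1 / q - 2 * cos (Θl l) / (e * sqrt q))
    (hA : ∀ l, A l = sqrt (B l - sin (Θl l) ^ 2))
    (hc : ∀ j l, c j l =
      (-sin (Θl l) ^ 2 + (-1 : ℝ) ^ (j - 1) * (cos (Θl l) - e / sqrt q) * A l) / (e * B l))
    (hs : ∀ j l, s j l =
      sin (Θl l) * (cos (Θl l) - e / sqrt q + (-1 : ℝ) ^ (j - 1) * A l) / (e * B l))
    (hf : ∀ j l, f j l =
      (a * (1 - e ^ 2) / (1 + e * c j l)) * (s j l * cos Θ - c j l * sin Θ)) :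
    (∀ j ∈ ({1, 2} : Set ℕ), ∀ l ∈ ({1, 2} : Set ℕ),
      f j l / (e * a * sin Θ) - 1 =
        (-1 : ℝ) ^ (j - 1) * (-(-1 : ℝ) ^ (l - 1) * cos Θ + 1 / (e * sqrt q)) / A l) ∧
    (∀ l ∈ ({1, 2} : Set ℕ),
      (f 1 l = f 2 l ↔ (-1 : ℝ) ^ (l - 1) * cos Θ = 1 / (e * sqrt q))) := by
  have hr : 0 < sqrt q := Real.sqrt_pos.mpr hq
  have hr2 : sqrt q ^ 2 = q := Real.sq_sqrt hq.le
  have hre : e ≠ sqrt q := by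
    intro h; exact hqe (by rw [h, hr2])
  have he' : e ≠ 0 := ne_of_gt he0
  have ha' : a ≠ 0 := ne_of_gt ha
  have hΘ1 : Θl 1 = Θ := by rw [hΘl 1]; norm_num
  have hΘ2 : Θl 2 = Θ + π := by rw [hΘl 2]; norm_num
  have hc1 : cos (Θl 1) = 1 * cos Θ := by rw [hΘ1]; ring
  have hs1 : sin (Θl 1) = 1 * sin Θ := by rw [hΘ1]; ring
  have hc2 : cos (Θl 2) = -1 * cos Θ := by rw [hΘ2, Real.cos_add_pi]; ring
  have hs2 : sin (Θl 2) = -1 * sin Θ := by rw [hΘ2, Real.sin_add_pi]; ring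
  -- key values
  have key : ∀ j l : ℕ, (j = 1 ∨ j = 2) → (l = 1 ∨ l = 2) →
      f j l = e * a * sin Θ * (A l + (-1 : ℝ) ^ (j - 1) *
        (1 / (e * sqrt q) - (-1 : ℝ) ^ (l - 1) * cos Θ)) / A l ∧ 0 < A l := by
    intro j l hj hl
    have hσ : ((-1 : ℝ) ^ (j - 1) = 1 ∨ (-1 : ℝ) ^ (j - 1) = -1) := by
      rcases hj with h | h <;> subst h <;> norm_num
    have hδ : ((-1 : ℝ) ^ (l - 1) = 1 ∨ (-1 : ℝ) ^ (l - 1) = -1) := by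
      rcases hl with h | h <;> subst h <;> norm_num
    have hCd : cos (Θl l) = (-1 : ℝ) ^ (l - 1) * cos Θ := by
      rcases hl with h | h <;> subst h <;> [exact hc1.trans (by norm_num); (rw [hc2]; norm_num)]
    have hSd : sin (Θl l) = (-1 : ℝ) ^ (l - 1) * sin Θ := by
      rcases hl with h | h <;> subst h <;> [exact hs1.trans (by norm_num); (rw [hs2]; norm_num)]
    have H := auxFull a e q (sqrt q) Θ (cos (Θl l)) (sin (Θl l)) ((-1 : ℝ) ^ (j - 1))
      ((-1 : ℝ) ^ (l - 1)) (B l) (A l) (c j l) (s j l) (f j l)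
      ha he0 he1 hq hr hr2 hre hsin hσ hδ hCd hSd (hB l) (hA l) (hc j l) (hs j l) (hf j l)
    rwa [hCd] at H
  have part1 : ∀ j ∈ ({1, 2} : Set ℕ), ∀ l ∈ ({1, 2} : Set ℕ),
      f j l / (e * a * sin Θ) - 1 =
        (-1 : ℝ) ^ (j - 1) * (-(-1 : ℝ) ^ (l - 1) * cos Θ + 1 / (e * sqrt q)) / A l := by
    intro j hj l hl
    simp only [Set.mem_insert_iff, Set.mem_singleton_iff] at hj hl
    obtain ⟨hval, hA0⟩ := key j l hj hl
    have hA' : A l ≠ 0 := ne_of_gt hA0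
    rw [hval]
    field_simp
    ring
  refine ⟨part1, ?_⟩
  intro l hl
  simp only [Set.mem_insert_iff, Set.mem_singleton_iff] at hl
  obtain ⟨hv1, hA0⟩ := key 1 l (Or.inl rfl) hl
  obtain ⟨hv2, -⟩ := key 2 l (Or.inr rfl) hl
  have hA' : A l ≠ 0 := ne_of_gt hA0
  have e1 : ((-1 : ℝ)) ^ (1 - 1) = 1 := by norm_num
  have e2 : ((-1 : ℝ)) ^ (2 - 1) = -1 := by norm_num
  rw [e1] at hv1
  rw [e2] at hv2
  constructor
  · intro h
    rw [hv1, hv2, div_eq_div_iff hA' hA'] at h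
    have h4 : e * a * sin Θ * (2 * (1 / (e * sqrt q) - (-1 : ℝ) ^ (l - 1) * cos Θ)) * A l = 0 := by
      linear_combination h
    have h5 : 2 * (1 / (e * sqrt q) - (-1 : ℝ) ^ (l - 1) * cos Θ) = 0 := by
      rcases mul_eq_zero.mp h4 with h5 | h5
      · rcases mul_eq_zero.mp h5 with h6 | h6
        · exact absurd h6 (mul_ne_zero (mul_ne_zero he' ha') hsin)
        · exact h6
      · exact absurd h5 hA'
    linarith
  · intro h
    rw [hv1, hv2, show (1 / (e * sqrt q) - (-1 : ℝ) ^ (l - 1) * cos Θ) = 0 by linarith]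
    ring
end

section
/- Let e ∈ (0,1), q > 0, q ≠ e², and Θ with sinΘ·cosΘ ≠ 0. With f_{j,l} as defined from the ellipse stationary points, (f_{1,1} − f_{2,2})/(e·a·sinΘ) = 4·(1/e² − 1)·(1 − 1/q)·cosΘ / (e√q·A₁·A₂·(A₁(cosΘ + 1/(e√q)) + A₂(cosΘ − 1/(e√q)))), and in particular f_{1,1} ≠ f_{2,2} whenever the denominator is nonzero and q ≠ 1. -/
open Real
theorem stmt19 (a e q Θ : ℝ) (ha : 0 < a) (he0 : 0 < e) (he1 : e < 1)
    (hq : 0 < q) (hqe : q ≠ e ^ 2) (hq1 : q ≠ 1) (hsc : sin Θ * cos Θ ≠ 0)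
    (Θl B A : ℕ → ℝ) (f : ℕ → ℕ → ℝ)
    (hΘl : ∀ l, Θl l = Θ + ((l : ℝ) - 1) * π)
    (hB : ∀ l, B l = 1 / e ^ 2 + 1 / q - 2 * cos (Θl l) / (e * sqrt q))
    (hA : ∀ l, A l = sqrt (B l - sin Θ ^ 2))
    (hApos : ∀ l, 0 < A l)
    (hf : ∀ j l, f j l / (e * a * sin Θ) =
      1 + (-1 : ℝ) ^ (j - 1) * (-(-1 : ℝ) ^ (l - 1) * cos Θ + 1 / (e * sqrt q)) / A l)
    (hden : A 1 * (cos Θ + 1 / (e * sqrt q)) + A 2 * (cos Θ - 1 / (e * sqrt q)) ≠ 0) :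
    (f 1 1 - f 2 2) / (e * a * sin Θ) =
      4 * (1 / e ^ 2 - 1) * (1 - 1 / q) * cos Θ /
        (e * sqrt q * A 1 * A 2 *
          (A 1 * (cos Θ + 1 / (e * sqrt q)) + A 2 * (cos Θ - 1 / (e * sqrt q)))) ∧
    f 1 1 ≠ f 2 2 := by
  have hs : sin Θ ≠ 0 := fun h => hsc (by rw [h]; ring)
  have hc : cos Θ ≠ 0 := fun h => hsc (by rw [h]; ring)
  have hsq : 0 < sqrt q := Real.sqrt_pos.mpr hq
  have hq2 : sqrt q ^ 2 = q := Real.sq_sqrt hq.le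
  have key : ∀ l, A l ^ 2 = B l - sin Θ ^ 2 := by
    intro l
    rw [hA l]
    exact Real.sq_sqrt (Real.sqrt_pos.mp ((hA l) ▸ hApos l)).le
  have hA1 : A 1 ^ 2 = 1 / e ^ 2 + 1 / q - 2 * cos Θ / (e * sqrt q) - sin Θ ^ 2 := by
    rw [key 1, hB 1, hΘl 1]; norm_num
  have hA2 : A 2 ^ 2 = 1 / e ^ 2 + 1 / q + 2 * cos Θ / (e * sqrt q) - sin Θ ^ 2 := by
    rw [key 2, hB 2, hΘl 2]
    norm_num [Real.cos_add]
    ring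
  have hA1p := hApos 1
  have hA2p := hApos 2
  have h11 := hf 1 1
  have h22 := hf 2 2
  norm_num at h11 h22
  have hpyth := Real.sin_sq_add_cos_sq Θ
  have hmain : (f 1 1 - f 2 2) / (e * a * sin Θ) =
      4 * (1 / e ^ 2 - 1) * (1 - 1 / q) * cos Θ /
        (e * sqrt q * A 1 * A 2 *
          (A 1 * (cos Θ + 1 / (e * sqrt q)) + A 2 * (cos Θ - 1 / (e * sqrt q)))) := by
    rw [sub_div, h11, h22]
    have heq : 0 < e * sqrt q := by positivity
    have hden' : A 1 * (cos Θ * (e*sqrt q) + 1) + A 2 * (cos Θ * (e*sqrt q) - 1) ≠ 0 := by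
      intro h
      apply hden
      have h2 : (A 1 * (cos Θ + 1/(e*sqrt q)) + A 2 * (cos Θ - 1/(e*sqrt q))) * (e*sqrt q)
          = A 1 * (cos Θ * (e*sqrt q) + 1) + A 2 * (cos Θ * (e*sqrt q) - 1) := by
        field_simp
      rcases mul_eq_zero.mp (h2.trans h) with h3 | h3
      · exact h3
      · exact absurd h3 heq.ne'
    have hA1c : A 1 ^ 2 * (e ^ 2 * q) = q + e ^ 2 - 2 * cos Θ * e * sqrt q - sin Θ ^ 2 * (e ^ 2 * q) := by
      rw [hA1]
      field_simp
      linear_combination (2 * e * cos Θ) * hq2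
    have hA2c : A 2 ^ 2 * (e ^ 2 * q) = q + e ^ 2 + 2 * cos Θ * e * sqrt q - sin Θ ^ 2 * (e ^ 2 * q) := by
      rw [hA2]
      field_simp
      linear_combination (-2 * e * cos Θ) * hq2
    field_simp [hden', hA1p.ne', hA2p.ne']
    rw [eq_div_iff (by convert hden' using 1; ring)]
    apply mul_left_cancel₀ he0.ne'
    linear_combination (1 + cos Θ * sqrt q * e) ^ 2 * hA1c - (1 - cos Θ * sqrt q * e) ^ 2 * hA2c +
      (-4 * (cos Θ * sqrt q * e) * cos Θ ^ 2 * e ^ 2) * hq2 +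
      (-4 * (cos Θ * sqrt q * e) * e ^ 2 * q) * hpyth
  refine ⟨hmain, fun hEq => ?_⟩
  rw [hEq, sub_self, zero_div] at hmain
  have hdn : e * sqrt q * A 1 * A 2 *
      (A 1 * (cos Θ + 1 / (e * sqrt q)) + A 2 * (cos Θ - 1 / (e * sqrt q))) ≠ 0 :=
    mul_ne_zero (by positivity) hden
  rcases div_eq_zero_iff.mp hmain.symm with h0 | h0
  · have h1 : (1 : ℝ) / e ^ 2 - 1 ≠ 0 := by
      have h3 : e ^ 2 < 1 := by nlinarith
      have h4 : (1 : ℝ) < 1 / e ^ 2 := by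
        rw [lt_div_iff₀ (by positivity)]
        linarith
      linarith
    have h2 : (1 : ℝ) - 1 / q ≠ 0 := by
      intro h
      apply hq1
      field_simp at h
      linarith
    exact (mul_ne_zero (mul_ne_zero (mul_ne_zero four_ne_zero h1) h2) hc) h0
  · exact hdn h0
end
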